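/- For any Steiner loop L_Q of order w+1 (with w the number of points of the quotient system Q, having b = w(w−1)/6 triples) and elementary abelian 2-group L_N of order 2^t, the number of factor systems f : L_Q × L_Q → L_N (symmetric functions with f(P,Ω̄)=0 and f(P,Q)=f(P,PQ)) equals 2^{tb}, since a factor system is uniquely determined by its (arbitrary) values on the triples of Q. -/

import Mathlib

structure SteinerLoopStr (L : Type) where
  mul : L → L → L
  one : L
  one_mul : ∀ x, mul one x = x
  comm : ∀ x y, mul x y = mul y x
  mul_self : ∀ x, mul x x = one
  ts : ∀ x y, mul x (mul x y) = y

namespace FSaux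

variable {Q : Type} [Fintype Q] [DecidableEq Q] (S : SteinerLoopStr Q)

lemma mul_one' (x : Q) : S.mul x S.one = x := by rw [S.comm, S.one_mul]

lemma ts' (x y : Q) : S.mul (S.mul x y) y = x := by
  rw [S.comm, S.comm x y, S.ts]

section basic
variable {S} {a b : Q}

lemma mul_ne_one (hab : a ≠ b) : S.mul a b ≠ S.one := fun h => hab (by
  have := S.ts a b; rw [h, mul_one'] at this; exact this)

lemma mul_ne_left (hb : b ≠ S.one) : S.mul a b ≠ a := fun h => hb (by
  have := S.ts a b; rw [h] at this; rw [← this, S.mul_self])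

lemma mul_ne_right (ha : a ≠ S.one) : S.mul a b ≠ b := fun h => ha (by
  have := ts' S a b; rw [h] at this; rw [← this, S.mul_self])

end basic

def valid (p : Q × Q) : Prop := p.1 ≠ p.2 ∧ p.1 ≠ S.one ∧ p.2 ≠ S.one

instance : DecidablePred (valid S) := fun p => by unfold valid; infer_instance

def Xs : Finset (Q × Q) := Finset.univ.filter (valid S)

def tri (p : Q × Q) : Finset Q := {p.1, p.2, S.mul p.1 p.2}

def Ts : Finset (Finset Q) := (Xs S).image (tri S)

lemma card_Xs (w : ℕ) (hQ : Fintype.card Q = w + 1) : (Xs S).card = w * (w - 1) := by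
  have h := Finset.card_eq_sum_card_fiberwise (f := Prod.fst) (s := Xs S)
    (t := Finset.univ.erase S.one) (fun p hp => by
      simp only [Xs, Finset.mem_filter] at hp
      exact Finset.mem_erase.mpr ⟨(Finset.mem_filter.mp (show p ∈ Finset.univ.filter (valid S) from hp)).2.2.1, Finset.mem_univ _⟩)
  have hfib : ∀ a ∈ Finset.univ.erase S.one,
      ((Xs S).filter (fun p => p.1 = a)).card = w - 1 := by
    intro a ha
    have ha1 : a ≠ S.one := (Finset.mem_erase.mp ha).1
    have : (Xs S).filter (fun p => p.1 = a)
        = ((Finset.univ.erase S.one).erase a).image (fun b => (a, b)) := by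
      ext p
      simp only [Xs, valid, Finset.mem_filter, Finset.mem_image, Finset.mem_erase,
        Finset.mem_univ, and_true, true_and]
      constructor
      · rintro ⟨⟨h1, h2, h3⟩, h4⟩
        exact ⟨p.2, ⟨fun h => h1 (h4.trans h.symm), h3⟩, by rw [← h4]⟩
      · rintro ⟨b, ⟨hba, hb1⟩, rfl⟩
        exact ⟨⟨fun h => hba h.symm, ha1, hb1⟩, rfl⟩
    rw [this, Finset.card_image_of_injective _ (fun x y h => by simpa using h),
      Finset.card_erase_of_mem (Finset.mem_erase.mpr ⟨ha1, Finset.mem_univ _⟩),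
      Finset.card_erase_of_mem (Finset.mem_univ _), Finset.card_univ, hQ]
    omega
  rw [Finset.sum_congr rfl hfib, Finset.sum_const, smul_eq_mul,
    Finset.card_erase_of_mem (Finset.mem_univ _), Finset.card_univ, hQ] at h
  simpa using h

lemma fiber_card {s : Finset Q} (hs : s ∈ Ts S) :
    ((Xs S).filter (fun p => tri S p = s)).card = 6 := by
  obtain ⟨⟨a, b⟩, hp, hps⟩ := Finset.mem_image.mp hs
  simp only [Xs, valid, Finset.mem_filter] at hp
  obtain ⟨-, hab, ha1, hb1⟩ := hp
  obtain ⟨c, hmab⟩ : ∃ c, S.mul a b = c := ⟨_, rfl⟩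
  have hca : c ≠ a := hmab ▸ mul_ne_left hb1
  have hcb : c ≠ b := hmab ▸ mul_ne_right ha1
  have hc1 : c ≠ S.one := hmab ▸ mul_ne_one hab
  have hac : a ≠ c := hca.symm
  have hbc : b ≠ c := hcb.symm
  have hmba : S.mul b a = c := by rw [S.comm]; exact hmab
  have hmac : S.mul a c = b := by rw [← hmab, S.ts]
  have hmca : S.mul c a = b := by rw [S.comm, hmac]
  have hmbc : S.mul b c = a := by rw [← hmab, S.comm a b, S.ts]
  have hmcb : S.mul c b = a := by rw [S.comm, hmbc]
  have hs' : s = {a, b, c} := by rw [← hps]; simp [tri, hmab]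
  have hcard : s.card = 3 := by
    rw [hs', Finset.card_insert_of_notMem (by simp [hab, hac]),
      Finset.card_insert_of_notMem (by simp [hbc]), Finset.card_singleton]
  have hmone : ∀ x : Q, x ∈ s → x ≠ S.one := by
    intro x hx
    rw [hs'] at hx; simp only [Finset.mem_insert, Finset.mem_singleton] at hx
    rcases hx with rfl | rfl | rfl <;> assumption
  have hmem : ∀ x y : Q, x ∈ s → y ∈ s → x ≠ y → S.mul x y ∈ s := by
    intro x y hx hy hxy
    rw [hs'] at hx hy ⊢
    simp only [Finset.mem_insert, Finset.mem_singleton] at hx hy ⊢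
    rcases hx with rfl | rfl | rfl <;> rcases hy with rfl | rfl | rfl <;>
      first
        | exact absurd rfl hxy
        | simp [hmab, hmba, hmac, hmca, hmbc, hmcb]
  have hval : ∀ x y : Q, x ∈ s → y ∈ s → x ≠ y →
      ((x ≠ y ∧ x ≠ S.one ∧ y ≠ S.one) ∧ tri S (x, y) = s) := by
    intro x y hx hy hxy
    have hx1 := hmone x hx
    have hy1 := hmone y hy
    refine ⟨⟨hxy, hx1, hy1⟩, ?_⟩
    refine Finset.eq_of_subset_of_card_le ?_ ?_
    · intro z hz
      simp only [tri, Finset.mem_insert, Finset.mem_singleton] at hz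
      rcases hz with rfl | rfl | rfl
      · exact hx
      · exact hy
      · exact hmem x y hx hy hxy
    · rw [hcard]
      have : (tri S (x, y)).card = 3 := by
        simp only [tri]
        rw [Finset.card_insert_of_notMem (by
            simp only [Finset.mem_insert, Finset.mem_singleton]
            push_neg
            exact ⟨hxy, (mul_ne_left hy1).symm⟩),
          Finset.card_insert_of_notMem (by
            simp only [Finset.mem_singleton]
            exact (mul_ne_right hx1).symm),
          Finset.card_singleton]
      omega
  have hfe : (Xs S).filter (fun p => tri S p = s)
      = {(a,b),(b,a),(a,c),(c,a),(b,c),(c,b)} := by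
    ext q
    simp only [Xs, valid, Finset.mem_filter, Finset.mem_univ, true_and,
      Finset.mem_insert, Finset.mem_singleton]
    constructor
    · rintro ⟨⟨h1, h2, h3⟩, h4⟩
      have hq1 : q.1 ∈ s := by rw [← h4]; simp [tri]
      have hq2 : q.2 ∈ s := by rw [← h4]; simp [tri]
      rw [hs'] at hq1 hq2
      simp only [Finset.mem_insert, Finset.mem_singleton] at hq1 hq2
      rcases hq1 with e1 | e1 | e1 <;> rcases hq2 with e2 | e2 | e2 <;>
        first
          | exact absurd (e1.trans e2.symm) h1
          | (simp only [Prod.ext_iff]; tauto)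
    · have hamem : a ∈ s := by rw [hs']; simp
      have hbmem : b ∈ s := by rw [hs']; simp
      have hcmem : c ∈ s := by rw [hs']; simp
      rintro (rfl | rfl | rfl | rfl | rfl | rfl)
      · exact hval a b hamem hbmem hab
      · exact hval b a hbmem hamem hab.symm
      · exact hval a c hamem hcmem hac
      · exact hval c a hcmem hamem hca
      · exact hval b c hbmem hcmem hbc
      · exact hval c b hcmem hbmem hcb
  rw [hfe]
  rw [Finset.card_insert_of_notMem (by simp [Prod.ext_iff]; tauto),
    Finset.card_insert_of_notMem (by simp [Prod.ext_iff]; tauto),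
    Finset.card_insert_of_notMem (by simp [Prod.ext_iff]; tauto),
    Finset.card_insert_of_notMem (by simp [Prod.ext_iff]; tauto),
    Finset.card_insert_of_notMem (by simp [Prod.ext_iff]; tauto),
    Finset.card_singleton]

lemma card_Ts (w : ℕ) (hQ : Fintype.card Q = w + 1) :
    (Ts S).card = w * (w - 1) / 6 := by
  have h := Finset.card_eq_sum_card_fiberwise (f := tri S) (s := Xs S) (t := Ts S)
    (fun x hx => Finset.mem_image_of_mem _ hx)
  rw [card_Xs S w hQ] at h
  rw [Finset.sum_congr rfl (fun s hs => fiber_card S hs), Finset.sum_const, smul_eq_mul] at h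
  rw [h]; omega


lemma tri_swap (P R : Q) : tri S (P, R) = tri S (R, P) := by
  ext z; simp only [tri, Finset.mem_insert, Finset.mem_singleton, S.comm P R]; tauto

lemma tri_mul {P R : Q} (h : P ≠ R) : tri S (P, S.mul P R) = tri S (P, R) := by
  ext z
  simp only [tri, Finset.mem_insert, Finset.mem_singleton, S.ts]
  tauto

lemma valid_mul {P R : Q} (h : valid S (P, R)) : valid S (P, S.mul P R) := by
  obtain ⟨h1, h2, h3⟩ := h
  exact ⟨(mul_ne_left h3).symm, h2, mul_ne_one h1⟩

lemma const_lemma {N : Type} [AddCommGroup N] {f : Q → Q → N}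
    (h1 : ∀ P R, f P R = f R P) (h5 : ∀ P R, f P R = f P (S.mul P R))
    {p q : Q × Q} (hp : valid S p) (hq : valid S q) (hpq : tri S p = tri S q) :
    f p.1 p.2 = f q.1 q.2 := by
  obtain ⟨a, b⟩ := p
  obtain ⟨hab, ha1, hb1⟩ := hp
  simp only at hab ha1 hb1 ⊢
  obtain ⟨c, hmab⟩ : ∃ c, S.mul a b = c := ⟨_, rfl⟩
  have hmba : S.mul b a = c := by rw [S.comm]; exact hmab
  have hmac : S.mul a c = b := by rw [← hmab, S.ts]
  have hmbc : S.mul b c = a := by rw [← hmab, S.comm a b, S.ts]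
  have key : ∀ x y : Q, x ∈ tri S (a, b) → y ∈ tri S (a, b) → x ≠ y →
      f x y = f a b := by
    intro x y hx hy hxy
    simp only [tri, Finset.mem_insert, Finset.mem_singleton, hmab] at hx hy
    rcases hx with rfl | rfl | rfl <;> rcases hy with rfl | rfl | rfl
    · exact absurd rfl hxy
    · rfl
    · rw [← hmab, ← h5]
    · exact h1 _ _
    · exact absurd rfl hxy
    · rw [← hmba, ← h5, h1]
    · rw [h1, ← hmab, ← h5]
    · rw [h1, ← hmba, ← h5, h1]
    · exact absurd rfl hxy
  have hq1 : q.1 ∈ tri S (a, b) := by rw [hpq]; simp [tri]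
  have hq2 : q.2 ∈ tri S (a, b) := by rw [hpq]; simp [tri]
  exact (key q.1 q.2 hq1 hq2 hq.1).symm

end FSaux

theorem number_of_factor_systems {Q N : Type} [Fintype Q] [DecidableEq Q]
    [Fintype N] [AddCommGroup N] (hN2 : ∀ x : N, x + x = 0)
    (S : SteinerLoopStr Q) (t w : ℕ)
    (hQ : Fintype.card Q = w + 1)
    (hN : Fintype.card N = 2 ^ t) :
    {f : Q → Q → N | (∀ P R : Q, f P R = f R P) ∧
        (∀ P : Q, f P S.one = 0) ∧ (∀ P : Q, f S.one P = 0) ∧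
        (∀ P : Q, f P P = 0) ∧
        (∀ P R : Q, f P R = f P (S.mul P R))}.ncard =
      2 ^ (t * (w * (w - 1) / 6)) := by
  classical
  open FSaux in
  rw [← Nat.card_coe_set_eq]
  have e : {f : Q → Q → N | (∀ P R : Q, f P R = f R P) ∧
        (∀ P : Q, f P S.one = 0) ∧ (∀ P : Q, f S.one P = 0) ∧
        (∀ P : Q, f P P = 0) ∧
        (∀ P R : Q, f P R = f P (S.mul P R))} ≃ ({s // s ∈ FSaux.Ts S} → N) := by
    have hrep : ∀ s : {s // s ∈ FSaux.Ts S}, ∃ p, p ∈ FSaux.Xs S ∧ FSaux.tri S p = s.1 :=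
      fun s => Finset.mem_image.mp s.2
    choose rep hrep1 hrep2 using hrep
    have hrepv : ∀ s, FSaux.valid S (rep s) := fun s =>
      (Finset.mem_filter.mp (hrep1 s)).2
    let gg : ({s // s ∈ FSaux.Ts S} → N) → Finset Q → N :=
      fun g s => if h : s ∈ FSaux.Ts S then g ⟨s, h⟩ else 0
    have htmem : ∀ {p : Q × Q}, FSaux.valid S p → FSaux.tri S p ∈ FSaux.Ts S :=
      fun hp => Finset.mem_image_of_mem _ (Finset.mem_filter.mpr ⟨Finset.mem_univ _, hp⟩)
    refine
      { toFun := fun f s => f.1 (rep s).1 (rep s).2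
        invFun := fun g => ⟨fun P R =>
          if h : FSaux.valid S (P, R) then gg g (FSaux.tri S (P, R)) else 0, ?_, ?_, ?_, ?_, ?_⟩
        left_inv := ?_
        right_inv := ?_ }
    · intro P R
      dsimp only
      by_cases h : FSaux.valid S (P, R)
      · rw [dif_pos h, dif_pos ⟨h.1.symm, h.2.2, h.2.1⟩, FSaux.tri_swap]
      · rw [dif_neg h, dif_neg (fun hc => h ⟨hc.1.symm, hc.2.2, hc.2.1⟩)]
    · intro P
      exact dif_neg (fun hc => hc.2.2 rfl)
    · intro P
      exact dif_neg (fun hc => hc.2.1 rfl)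
    · intro P
      exact dif_neg (fun hc => hc.1 rfl)
    · intro P R
      dsimp only
      by_cases h : FSaux.valid S (P, R)
      · rw [dif_pos h, dif_pos (FSaux.valid_mul S h), FSaux.tri_mul S h.1]
      · rw [dif_neg h]
        by_cases hPR : P = R
        · subst hPR
          rw [S.mul_self, dif_neg (fun hc => hc.2.2 rfl)]
        · have hone : P = S.one ∨ R = S.one := by
            by_contra hc
            push_neg at hc
            exact h ⟨hPR, hc.1, hc.2⟩
          rcases hone with rfl | rfl
          · rw [dif_neg (fun hc => hc.2.1 rfl)]
          · rw [FSaux.mul_one', dif_neg (fun hc => hc.1 rfl)]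
    · intro f
      apply Subtype.ext
      funext P R
      obtain ⟨c1, c2, c3, c4, c5⟩ := f.2
      show (if h : FSaux.valid S (P, R) then _ else 0) = f.1 P R
      by_cases h : FSaux.valid S (P, R)
      · rw [dif_pos h]
        simp only [gg]
        rw [dif_pos (htmem h)]
        exact FSaux.const_lemma S c1 c5 (hrepv ⟨_, htmem h⟩) h (hrep2 ⟨_, htmem h⟩)
      · rw [dif_neg h]
        by_cases hPR : P = R
        · subst hPR; exact (c4 P).symm
        · have hone : P = S.one ∨ R = S.one := by
            by_contra hc
            push_neg at hc
            exact h ⟨hPR, hc.1, hc.2⟩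
          rcases hone with rfl | rfl
          · exact (c3 R).symm
          · exact (c2 P).symm
    · intro g
      funext s
      show (if h : FSaux.valid S ((rep s).1, (rep s).2) then _ else 0) = g s
      rw [dif_pos (hrepv s)]
      show gg g (FSaux.tri S ((rep s).1, (rep s).2)) = g s
      have : FSaux.tri S ((rep s).1, (rep s).2) = s.1 := hrep2 s
      rw [this]
      simp only [gg]
      rw [dif_pos s.2]
  rw [Nat.card_congr e, Nat.card_eq_fintype_card, Fintype.card_fun,
    Fintype.card_coe, FSaux.card_Ts S w hQ, hN, ← pow_mul]
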